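/- Suppose α ≤ 1 ≤ γ with α < γ (d = 1). The global minimizer of E_n among ordered configurations x_1 ≤ … ≤ x_n in ℝ with zero center of mass is unique, and it is symmetric: x_i = −x_{n+1−i} for all i. -/

import Mathlib

open Finset

/-- `r^η/η` with the convention `r^0/0 = log r`. -/
noncomputable def pw (η r : ℝ) : ℝ := if η = 0 then Real.log r else r ^ η / η

noncomputable def wf (α γ r : ℝ) : ℝ := pw γ r - pw α r

lemma pw_hasDerivAt (η : ℝ) {r : ℝ} (hr : 0 < r) :
    HasDerivAt (pw η) (r ^ (η - 1)) r := by
  rcases eq_or_ne η 0 with h | h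
  · have := Real.hasDerivAt_log hr.ne'
    have e : r⁻¹ = r ^ (η - 1) := by
      rw [h]; norm_num; exact (Real.rpow_neg_one r).symm
    rw [e] at this
    convert this using 1
    funext s; simp [pw, h]
  · have h1 : HasDerivAt (fun s : ℝ => s ^ η) (η * r ^ (η - 1)) r :=
      Real.hasDerivAt_rpow_const (Or.inl hr.ne')
    have h2 := h1.div_const η
    have e : η * r ^ (η - 1) / η = r ^ (η - 1) := by
      field_simp
    rw [e] at h2
    have hf : pw η = fun s => s ^ η / η := by funext s; simp [pw, h]
    rw [hf]; exact h2

lemma wf_hasDerivAt {α γ : ℝ} {r : ℝ} (hr : 0 < r) :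
    HasDerivAt (wf α γ) (r ^ (γ - 1) - r ^ (α - 1)) r :=
  (pw_hasDerivAt γ hr).sub (pw_hasDerivAt α hr)

lemma wf_strictConvex {α γ : ℝ} (hα : α ≤ 1) (hγ : 1 ≤ γ) (h : α < γ) :
    StrictConvexOn ℝ (Set.Ioi 0) (wf α γ) := by
  apply StrictMonoOn.strictConvexOn_of_deriv (convex_Ioi 0)
  · intro r hr
    exact (wf_hasDerivAt (Set.mem_Ioi.mp hr)).continuousAt.continuousWithinAt
  · rw [interior_Ioi]
    intro r hr s hs hrs
    rw [Set.mem_Ioi] at hr hs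
    rw [(wf_hasDerivAt hr).deriv, (wf_hasDerivAt hs).deriv]
    have h1 : r ^ (γ - 1) ≤ s ^ (γ - 1) := Real.rpow_le_rpow hr.le hrs.le (by linarith)
    have h2 : s ^ (α - 1) ≤ r ^ (α - 1) :=
      Real.rpow_le_rpow_of_nonpos hr hrs.le (by linarith)
    rcases lt_or_ge 1 γ with hγ1 | hγ1
    · have : r ^ (γ - 1) < s ^ (γ - 1) := Real.rpow_lt_rpow hr.le hrs (by linarith)
      linarith
    · have hα1 : α < 1 := by linarith
      have : s ^ (α - 1) < r ^ (α - 1) :=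
        Real.rpow_lt_rpow_of_neg hr hrs (by linarith)
      linarith

lemma wf_zero {α γ : ℝ} (hα : 0 < α) (hγ : 1 ≤ γ) : wf α γ 0 = 0 := by
  have hγ0 : γ ≠ 0 := by positivity
  simp [wf, pw, hγ0, hα.ne', Real.zero_rpow hγ0, Real.zero_rpow hα.ne']

lemma wf_half_lt {α γ : ℝ} (hα : α ≤ 1) (hγ : 1 ≤ γ) (h : α < γ) (hα0 : 0 < α)
    {b : ℝ} (hb : 0 < b) : wf α γ (b / 2) < wf α γ b / 2 := by
  have hγ0 : 0 < γ := by linarith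
  have hbγ : 0 < b ^ γ := Real.rpow_pos_of_pos hb γ
  have hbα : 0 < b ^ α := Real.rpow_pos_of_pos hb α
  have h2 : (0:ℝ) < 2⁻¹ := by norm_num
  have h21 : (2:ℝ)⁻¹ ≤ 1 := by norm_num
  have eγ : (b / 2) ^ γ = b ^ γ * (2:ℝ)⁻¹ ^ γ := by
    rw [div_eq_mul_inv, Real.mul_rpow hb.le h2.le]
  have eα : (b / 2) ^ α = b ^ α * (2:ℝ)⁻¹ ^ α := by
    rw [div_eq_mul_inv, Real.mul_rpow hb.le h2.le]
  have hA : (2:ℝ)⁻¹ ^ γ ≤ 2⁻¹ := by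
    have := Real.rpow_le_rpow_of_exponent_ge h2 h21 hγ
    rwa [Real.rpow_one] at this
  have hB : (2:ℝ)⁻¹ ≤ (2:ℝ)⁻¹ ^ α := by
    have := Real.rpow_le_rpow_of_exponent_ge h2 h21 hα
    rwa [Real.rpow_one] at this
  have key : b ^ γ * (2:ℝ)⁻¹ ^ γ / γ - b ^ α * (2:ℝ)⁻¹ ^ α / α
      < (b ^ γ / γ - b ^ α / α) / 2 := by
    have e1 : b ^ γ * (2:ℝ)⁻¹ / γ = (b ^ γ / γ) / 2 := by ring
    have e2 : b ^ α * (2:ℝ)⁻¹ / α = (b ^ α / α) / 2 := by ring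
    rcases lt_or_ge 1 γ with hγ1 | hγ1
    · have hA' : (2:ℝ)⁻¹ ^ γ < 2⁻¹ := by
        have := Real.rpow_lt_rpow_of_exponent_gt h2 (by norm_num) hγ1
        rwa [Real.rpow_one] at this
      have k1 : b ^ γ * (2:ℝ)⁻¹ ^ γ / γ < b ^ γ * (2:ℝ)⁻¹ / γ := by gcongr
      have k2 : b ^ α * (2:ℝ)⁻¹ / α ≤ b ^ α * (2:ℝ)⁻¹ ^ α / α := by gcongr
      linarith
    · have hα1 : α < 1 := by linarith
      have hB' : (2:ℝ)⁻¹ < (2:ℝ)⁻¹ ^ α := by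
        have := Real.rpow_lt_rpow_of_exponent_gt h2 (by norm_num) hα1
        rwa [Real.rpow_one] at this
      have k1 : b ^ γ * (2:ℝ)⁻¹ ^ γ / γ ≤ b ^ γ * (2:ℝ)⁻¹ / γ := by gcongr
      have k2 : b ^ α * (2:ℝ)⁻¹ / α < b ^ α * (2:ℝ)⁻¹ ^ α / α := by gcongr
      linarith
  have dd : wf α γ (b / 2) = b ^ γ * (2:ℝ)⁻¹ ^ γ / γ - b ^ α * (2:ℝ)⁻¹ ^ α / α := by
    simp [wf, pw, hα0.ne', hγ0.ne', eγ, eα]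
  have dd2 : wf α γ b = b ^ γ / γ - b ^ α / α := by
    simp [wf, pw, hα0.ne', hγ0.ne']
  rw [dd, dd2]; exact key

lemma wf_mid_lt {α γ : ℝ} (hα : α ≤ 1) (hγ : 1 ≤ γ) (h : α < γ)
    {a b : ℝ} (ha : 0 ≤ a) (hb : 0 ≤ b) (hab : a ≠ b)
    (hpos : α ≤ 0 → (0 < a ∧ 0 < b)) :
    wf α γ ((a + b) / 2) < (wf α γ a + wf α γ b) / 2 := by
  rcases ha.eq_or_lt with ha0 | ha0
  · -- a = 0
    have hb0 : 0 < b := hb.lt_of_ne (fun e => hab (ha0.symm.trans e))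
    have hα0 : 0 < α := by
      by_contra h'
      push_neg at h'
      exact absurd (hpos h').1 (by rw [← ha0]; exact lt_irrefl 0)
    rw [← ha0, zero_add, wf_zero hα0 hγ, zero_add]
    exact wf_half_lt hα hγ h hα0 hb0
  rcases hb.eq_or_lt with hb0 | hb0
  · have hα0 : 0 < α := by
      by_contra h'
      push_neg at h'
      exact absurd (hpos h').2 (by rw [← hb0]; exact lt_irrefl 0)
    rw [← hb0, add_zero, wf_zero hα0 hγ, add_zero]
    have := wf_half_lt hα hγ h hα0 ha0
    linarith
  · have hc := (wf_strictConvex hα hγ h).2 (Set.mem_Ioi.mpr ha0) (Set.mem_Ioi.mpr hb0)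
      hab (by norm_num : (0:ℝ) < 1/2) (by norm_num : (0:ℝ) < 1/2) (by norm_num)
    simp only [smul_eq_mul] at hc
    have e : (a + b) / 2 = 1/2 * a + 1/2 * b := by ring
    rw [e]
    linarith

noncomputable def En1 (n : ℕ) (α γ : ℝ) (x : Fin n → ℝ) : ℝ :=
  ∑ i, ∑ j, if i = j then 0 else pw γ |x i - x j| - pw α |x i - x j|

lemma En1_eq (n : ℕ) (α γ : ℝ) (z : Fin n → ℝ) :
    En1 n α γ z = ∑ p ∈ (univ ×ˢ univ : Finset (Fin n × Fin n)),
      (if p.1 = p.2 then (0:ℝ) else wf α γ |z p.1 - z p.2|) := by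
  rw [En1]
  exact (Finset.sum_product' univ univ
    (fun i j => if i = j then (0:ℝ) else wf α γ |z i - z j|)).symm

/-- Admissible configuration: ordered, zero center of mass, distinct if `α ≤ 0`. -/
def Adm (n : ℕ) (α : ℝ) (x : Fin n → ℝ) : Prop :=
  Monotone x ∧ (∑ i, x i) = 0 ∧ (α ≤ 0 → Function.Injective x)

lemma abs_mid {n : ℕ} {x y : Fin n → ℝ} (hxm : Monotone x) (hym : Monotone y)
    (i j : Fin n) :
    |(x i + y i) / 2 - (x j + y j) / 2| = (|x i - x j| + |y i - y j|) / 2 := by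
  rcases le_total i j with hij | hij
  · have h1 : x i ≤ x j := hxm hij
    have h2 : y i ≤ y j := hym hij
    rw [abs_of_nonpos (by linarith), abs_of_nonpos (by linarith),
      abs_of_nonpos (by linarith)]
    ring
  · have h1 : x j ≤ x i := hxm hij
    have h2 : y j ≤ y i := hym hij
    rw [abs_of_nonneg (by linarith), abs_of_nonneg (by linarith),
      abs_of_nonneg (by linarith)]
    ring

lemma En1_midpoint_lt {n : ℕ} (hn : 2 ≤ n) {α γ : ℝ} (hα : α ≤ 1) (hγ : 1 ≤ γ)
    (h : α < γ) {x y : Fin n → ℝ} (hx : Adm n α x) (hy : Adm n α y) (hxy : x ≠ y) :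
    En1 n α γ (fun i => (x i + y i) / 2) < (En1 n α γ x + En1 n α γ y) / 2 := by
  obtain ⟨hxm, hxs, hxi⟩ := hx
  obtain ⟨hym, hys, hyi⟩ := hy
  -- key pair with distinct gaps
  have key : ∃ i j : Fin n, i ≠ j ∧ |x i - x j| ≠ |y i - y j| := by
    by_contra hc
    push_neg at hc
    have hdiff : ∀ i j : Fin n, x i - x j = y i - y j := by
      intro i j
      rcases eq_or_ne i j with rfl | hij
      · simp
      · have habs := hc i j hij
        rcases le_total i j with hle | hle
        · have h1 : x i ≤ x j := hxm hle
          have h2 : y i ≤ y j := hym hle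
          rw [abs_of_nonpos (by linarith), abs_of_nonpos (by linarith)] at habs
          linarith
        · have h1 : x j ≤ x i := hxm hle
          have h2 : y j ≤ y i := hym hle
          rw [abs_of_nonneg (by linarith), abs_of_nonneg (by linarith)] at habs
          linarith
    obtain ⟨i₀, hi₀⟩ := Function.ne_iff.mp hxy
    have hconst : ∀ i, x i - y i = x i₀ - y i₀ := by
      intro i
      have := hdiff i i₀
      linarith
    have hsum : ∑ i : Fin n, (x i - y i) = 0 := by
      rw [Finset.sum_sub_distrib, hxs, hys]; ring
    rw [Finset.sum_congr rfl (fun i _ => hconst i), Finset.sum_const,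
      Finset.card_univ, Fintype.card_fin, nsmul_eq_mul] at hsum
    have hn0 : (0:ℝ) < (n:ℝ) := by positivity
    have : x i₀ - y i₀ = 0 := by
      rcases mul_eq_zero.mp hsum with h' | h'
      · exact absurd h' (by positivity)
      · exact h'
    exact hi₀ (by linarith)
  obtain ⟨i₀, j₀, hij₀, hne₀⟩ := key
  rw [En1_eq, En1_eq, En1_eq, ← Finset.sum_add_distrib, Finset.sum_div]
  apply Finset.sum_lt_sum
  · rintro ⟨i, j⟩ -
    rcases eq_or_ne i j with rfl | hij
    · simp
    · simp only [hij, if_neg]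
      set a := |x i - x j| with hadef
      set b := |y i - y j| with hbdef
      have hmid : |(x i + y i) / 2 - (x j + y j) / 2| = (a + b) / 2 :=
        abs_mid hxm hym i j
      rw [hmid]
      have ha : 0 ≤ a := abs_nonneg _
      have hb : 0 ≤ b := abs_nonneg _
      have hpos : α ≤ 0 → 0 < a ∧ 0 < b := by
        intro hα'
        constructor
        · exact abs_pos.mpr (sub_ne_zero.mpr (fun e => hij (hxi hα' e)))
        · exact abs_pos.mpr (sub_ne_zero.mpr (fun e => hij (hyi hα' e)))
      rcases eq_or_ne a b with hab | hab
      · rw [hab]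
        have : (b + b) / 2 = b := by ring
        rw [this]
        exact le_of_eq (by ring)
      · exact (wf_mid_lt hα hγ h ha hb hab hpos).le
  · refine ⟨(i₀, j₀), Finset.mem_product.mpr ⟨Finset.mem_univ _, Finset.mem_univ _⟩, ?_⟩
    simp only [hij₀, if_neg]
    rw [abs_mid hxm hym i₀ j₀]
    have hpos : α ≤ 0 → 0 < |x i₀ - x j₀| ∧ 0 < |y i₀ - y j₀| := by
      intro hα'
      exact ⟨abs_pos.mpr (sub_ne_zero.mpr (fun e => hij₀ (hxi hα' e))),
        abs_pos.mpr (sub_ne_zero.mpr (fun e => hij₀ (hyi hα' e)))⟩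
    exact wf_mid_lt hα hγ h (abs_nonneg _) (abs_nonneg _) hne₀ hpos

theorem stmt_17 (n : ℕ) (hn : 2 ≤ n) (α γ : ℝ) (hα : α ≤ 1) (hγ : 1 ≤ γ) (h : α < γ)
    (x : Fin n → ℝ) (hx : Adm n α x)
    (hxmin : ∀ z : Fin n → ℝ, Adm n α z → En1 n α γ x ≤ En1 n α γ z) :
    (∀ y : Fin n → ℝ, Adm n α y →
      (∀ z : Fin n → ℝ, Adm n α z → En1 n α γ y ≤ En1 n α γ z) → x = y) ∧
    (∀ i : Fin n, x i = -x i.rev) := by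
  have huniq : ∀ y : Fin n → ℝ, Adm n α y →
      (∀ z : Fin n → ℝ, Adm n α z → En1 n α γ y ≤ En1 n α γ z) → x = y := by
    intro y hy hymin
    by_contra hne
    have heq : En1 n α γ x = En1 n α γ y := le_antisymm (hxmin y hy) (hymin x hx)
    set m := fun i => (x i + y i) / 2 with hm
    have hmAdm : Adm n α m := by
      refine ⟨?_, ?_, ?_⟩
      · intro i j hij
        have := hx.1 hij
        have := hy.1 hij
        simp only [hm]
        linarith
      · have : ∑ i, m i = ((∑ i, x i) + ∑ i, y i) / 2 := by
          rw [← Finset.sum_add_distrib, Finset.sum_div]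
        rw [this, hx.2.1, hy.2.1]; norm_num
      · intro hα'
        have sx := hx.1.strictMono_of_injective (hx.2.2 hα')
        have sy := hy.1.strictMono_of_injective (hy.2.2 hα')
        have : StrictMono m := by
          intro i j hij
          have := sx hij
          have := sy hij
          simp only [hm]
          linarith
        exact this.injective
    have hlt := En1_midpoint_lt hn hα hγ h hx hy hne
    have hge := hxmin m hmAdm
    rw [← heq] at hlt
    simp only [hm] at hge hlt
    linarith
  refine ⟨huniq, ?_⟩
  set x' := fun i : Fin n => -x i.rev with hx'
  have hx'Adm : Adm n α x' := by
    refine ⟨?_, ?_, ?_⟩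
    · intro i j hij
      simp only [hx']
      have : x j.rev ≤ x i.rev := hx.1 (Fin.rev_le_rev.mpr hij)
      linarith
    · have : ∑ i : Fin n, x i.rev = ∑ i : Fin n, x i :=
        Fintype.sum_bijective Fin.rev (Fin.rev_involutive.bijective) _ _ (fun i => rfl)
      simp only [hx', Finset.sum_neg_distrib, this, hx.2.1, neg_zero]
    · intro hα' a b hab
      simp only [hx', neg_inj] at hab
      exact Fin.rev_injective (hx.2.2 hα' hab)
  have hEeq : En1 n α γ x' = En1 n α γ x := by
    rw [En1, En1]
    have hterm : ∀ i j : Fin n,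
        (if i = j then (0:ℝ) else pw γ |x' i - x' j| - pw α |x' i - x' j|)
        = (if i.rev = j.rev then (0:ℝ) else
            pw γ |x i.rev - x j.rev| - pw α |x i.rev - x j.rev|) := by
      intro i j
      have e1 : (i = j) = (i.rev = j.rev) := by
        simp [Fin.rev_inj]
      have e2 : |x' i - x' j| = |x i.rev - x j.rev| := by
        simp only [hx']
        rw [show -x i.rev - -x j.rev = -(x i.rev - x j.rev) by ring, abs_neg]
      rw [e2]
      simp only [Fin.rev_inj]
    calc ∑ i : Fin n, ∑ j : Fin n,
          (if i = j then (0:ℝ) else pw γ |x' i - x' j| - pw α |x' i - x' j|)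
        = ∑ i : Fin n, ∑ j : Fin n, (if i.rev = j.rev then (0:ℝ) else
            pw γ |x i.rev - x j.rev| - pw α |x i.rev - x j.rev|) := by
          exact Finset.sum_congr rfl fun i _ => Finset.sum_congr rfl fun j _ => hterm i j
      _ = ∑ i : Fin n, ∑ j : Fin n,
            (if i = j then (0:ℝ) else pw γ |x i - x j| - pw α |x i - x j|) := by
          refine Fintype.sum_bijective Fin.rev Fin.rev_involutive.bijective _ _
            (fun i => ?_)
          refine Fintype.sum_bijective Fin.rev Fin.rev_involutive.bijective _ _
            (fun j => ?_)
          rfl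
  have hx'min : ∀ z : Fin n → ℝ, Adm n α z → En1 n α γ x' ≤ En1 n α γ z := by
    intro z hz
    rw [hEeq]
    exact hxmin z hz
  have := huniq x' hx'Adm hx'min
  intro i
  have := congrFun this i
  simpa [hx'] using this
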